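/- Size of image partitions under the diagonal map: let M : ℤ² → ℤ≥0 be an environment with nonnegative integer weights, u ∈ ℤ⁴↑ a box, and assume the increments Z^{Δk}_M(u) = Z_M(u^k) − Z_M(u^{k−1}) are nonincreasing in k (so Z^Δ_M(u) is a partition). Then the size of the partition Z^Δ_M(u) for k_max = min(u⁺₁ − u⁻₁ + 1, u⁺₂ − u⁻₂ + 1) equals the total weight: |Z^Δ_M(u)| = Σ_{k=1}^{k_max} Z^{Δk}_M(u) = Z_M(u^{k_max}) = Σ_{x ∈ u} M_x when k_max = u⁺₂ − u⁻₂ + 1 ≤ u⁺₁ − u⁻₁ + 1 (i.e. when the box is at least as wide as it is tall, the maximal disjoint path family covers every point of the box, so the maximal multi-point last passage value is the full sum of weights over the box). -/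

import Mathlib

/-- `SE x y` means `x ↘ y`: `x₁ ≤ y₁` and `x₂ ≥ y₂`. -/
def SE (x y : ℤ × ℤ) : Prop := x.1 ≤ y.1 ∧ y.2 ≤ x.2

/-- A point of `ℤ⁴↑`: a pair `(u⁻, u⁺)` with `u⁻ ≤ u⁺` coordinatewise. -/
def IsBox (u : (ℤ × ℤ) × (ℤ × ℤ)) : Prop := u.1.1 ≤ u.2.1 ∧ u.1.2 ≤ u.2.2

/-- The pair `(u, v)` crosses horizontally: `u⁻ ↘ v⁻` and `v⁺ ↘ u⁺`. -/
def CrossH (u v : (ℤ × ℤ) × (ℤ × ℤ)) : Prop := SE u.1 v.1 ∧ SE v.2 u.2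

/-- The pair `(u, v)` crosses vertically: `v⁻ ↘ u⁻` and `u⁺ ↘ v⁺`. -/
def CrossV (u v : (ℤ × ℤ) × (ℤ × ℤ)) : Prop := SE v.1 u.1 ∧ SE u.2 v.2

/-- The rectangle in `ℤ²` associated to a box. -/
def boxSet (u : (ℤ × ℤ) × (ℤ × ℤ)) : Set (ℤ × ℤ) :=
  {p | u.1.1 ≤ p.1 ∧ p.1 ≤ u.2.1 ∧ u.1.2 ≤ p.2 ∧ p.2 ≤ u.2.2}

/-- One step of an up-right path: increase exactly one coordinate by 1. -/
def UpStep (a b : ℤ × ℤ) : Prop := b = (a.1 + 1, a.2) ∨ b = (a.1, a.2 + 1)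

/-- `IsPath p x y` : `p` is an up-right lattice path from `x` to `y`. -/
def IsPath (p : List (ℤ × ℤ)) (x y : ℤ × ℤ) : Prop :=
  p.head? = some x ∧ p.getLast? = some y ∧ p.Chain' UpStep

/-- The weight of a path in the environment `M`. -/
noncomputable def pathWeight (M : ℤ × ℤ → ℝ) (p : List (ℤ × ℤ)) : ℝ := (p.map M).sum

/-- The endpoint tuple `u^k`: the `i`-th pair (0-indexed) is
`(u⁻ + (i, 0); u⁺ - (k - 1 - i, 0))`. -/
def ukEnds (u : (ℤ × ℤ) × (ℤ × ℤ)) (k : ℕ) (i : Fin k) : (ℤ × ℤ) × (ℤ × ℤ) :=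
  ((u.1.1 + (i : ℤ), u.1.2), (u.2.1 - ((k : ℤ) - 1 - (i : ℤ)), u.2.2))

/-- The multi-point last passage value `Z_M(e)` for a `k`-tuple of endpoint pairs `e`:
the supremum over `k`-tuples of pairwise disjoint up-right paths with the prescribed
endpoints of the total weight. -/
noncomputable def ZMulti (M : ℤ × ℤ → ℝ) (k : ℕ)
    (e : Fin k → (ℤ × ℤ) × (ℤ × ℤ)) : ℝ :=
  sSup {w | ∃ π : Fin k → List (ℤ × ℤ),
    (∀ i, IsPath (π i) (e i).1 (e i).2) ∧
    (∀ i j, i ≠ j → ∀ x ∈ π i, x ∉ π j) ∧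
    w = ∑ i, pathWeight M (π i)}

/-- horizontal segment of `n` points starting at `(L, y)` going right -/
def hseg (L y : ℤ) (n : ℕ) : List (ℤ × ℤ) := (List.range n).map (fun t : ℕ => (L + (t : ℤ), y))

lemma hseg_succ (L y : ℤ) (m : ℕ) :
    hseg L y (m + 1) = hseg L y m ++ [(L + m, y)] := by
  simp [hseg, List.range_succ]

lemma hseg_ne_nil {L y : ℤ} {n : ℕ} (hn : 0 < n) : hseg L y n ≠ [] := by
  intro h
  have := congrArg List.length h
  simp [hseg] at this
  omega

lemma hseg_head? {L y : ℤ} {n : ℕ} (hn : 0 < n) : (hseg L y n).head? = some (L, y) := by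
  obtain ⟨m, rfl⟩ := Nat.exists_eq_succ_of_ne_zero hn.ne'
  rw [hseg, List.head?_map, List.range_succ_eq_map]
  simp

lemma hseg_getLast? {L y : ℤ} {n : ℕ} (hn : 0 < n) :
    (hseg L y n).getLast? = some (L + n - 1, y) := by
  obtain ⟨m, rfl⟩ := Nat.exists_eq_succ_of_ne_zero hn.ne'
  rw [hseg_succ, List.getLast?_concat]
  congr 1
  have : ((m : ℤ) + 1) = ((m + 1 : ℕ) : ℤ) := by push_cast; ring
  rw [Prod.mk.injEq]
  constructor
  · push_cast; ring
  · rfl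

lemma hseg_chain' {L y : ℤ} {n : ℕ} : (hseg L y n).Chain' UpStep := by
  rcases n with _ | m
  · simp [hseg, List.Chain']
  · rw [hseg, List.Chain', List.isChain_map]
    refine (List.isChain_range_succ _ m).2 ?_
    intro t ht
    left
    rw [Prod.mk.injEq]
    exact ⟨by push_cast; ring, rfl⟩

lemma hseg_mem {L y : ℤ} {n : ℕ} {z : ℤ × ℤ} :
    z ∈ hseg L y n ↔ z.2 = y ∧ L ≤ z.1 ∧ z.1 < L + n := by
  rw [hseg, List.mem_map]
  constructor
  · rintro ⟨t, ht, rfl⟩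
    rw [List.mem_range] at ht
    refine ⟨rfl, ?_, ?_⟩ <;> simp <;> omega
  · rintro ⟨h2, h1, h3⟩
    refine ⟨(z.1 - L).toNat, ?_, ?_⟩
    · rw [List.mem_range]; omega
    · have hz : L + ((z.1 - L).toNat : ℤ) = z.1 := by omega
      rw [hz, ← h2]

lemma hseg_map_sum (f : ℤ × ℤ → ℝ) (L y : ℤ) (n : ℕ) :
    ((hseg L y n).map f).sum = ∑ x ∈ Finset.Ico L (L + n), f (x, y) := by
  induction n with
  | zero => simp [hseg]
  | succ m ih =>
    rw [hseg_succ, List.map_append, List.sum_append, ih]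
    have h2 : Finset.Ico L (L + (↑(m+1) : ℤ)) = insert (L + m) (Finset.Ico L (L + m)) := by
      ext x
      simp only [Finset.mem_Ico, Finset.mem_insert]
      push_cast
      omega
    rw [h2, Finset.sum_insert (by simp)]
    simp
    ring

/-! ### The staircase path family -/

def Lx (a b : ℤ) (k i j : ℕ) : ℤ :=
  if (i : ℤ) + j ≤ (k : ℤ) - 1 then a + i else b - k + 1 + i

def Rx (a b : ℤ) (k i j : ℕ) : ℤ :=
  if (k : ℤ) - 1 ≤ (i : ℤ) + j then b - k + 1 + i else a + i

def rowLen (a b : ℤ) (k i j : ℕ) : ℕ := (Rx a b k i j - Lx a b k i j + 1).toNat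

def rowList (a b c : ℤ) (k i j : ℕ) : List (ℤ × ℤ) :=
  hseg (Lx a b k i j) (c + j) (rowLen a b k i j)

def dpath (a b c : ℤ) (k i : ℕ) : List (ℤ × ℤ) :=
  ((List.range k).map (rowList a b c k i)).flatten

section PathFacts

variable {a b c : ℤ} {k : ℕ}

lemma Lx_le_Rx (hba : (k : ℤ) - 1 ≤ b - a) (i j : ℕ) : Lx a b k i j ≤ Rx a b k i j := by
  unfold Lx Rx; split_ifs <;> omega

lemma Rx_lt_Lx (hba : (k : ℤ) - 1 ≤ b - a) {i i' : ℕ} (j : ℕ) (h : i < i') :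
    Rx a b k i j < Lx a b k i' j := by
  unfold Lx Rx; split_ifs <;> omega

lemma Lx_succ_row (i j : ℕ) : Lx a b k i (j + 1) = Rx a b k i j := by
  unfold Lx Rx; split_ifs <;> push_cast at * <;> omega

lemma Lx_succ_col (hba : (k : ℤ) - 1 ≤ b - a) (i j : ℕ) :
    Lx a b k (i + 1) j = Rx a b k i j + 1 := by
  unfold Lx Rx; split_ifs <;> push_cast at * <;> omega

lemma Rx_le_b (hba : (k : ℤ) - 1 ≤ b - a) {i : ℕ} (hi : i < k) (j : ℕ) :
    Rx a b k i j ≤ b := by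
  unfold Rx; split_ifs <;> omega

lemma rowLen_pos (hba : (k : ℤ) - 1 ≤ b - a) (i j : ℕ) : 0 < rowLen a b k i j := by
  have := Lx_le_Rx (a := a) (b := b) hba i j
  unfold rowLen; omega

lemma rowLen_cast (hba : (k : ℤ) - 1 ≤ b - a) (i j : ℕ) :
    (rowLen a b k i j : ℤ) = Rx a b k i j - Lx a b k i j + 1 := by
  have := Lx_le_Rx (a := a) (b := b) hba i j
  unfold rowLen; omega

lemma rowList_ne_nil (hba : (k : ℤ) - 1 ≤ b - a) (i j : ℕ) :
    rowList a b c k i j ≠ [] := hseg_ne_nil (rowLen_pos hba i j)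

lemma rowList_head? (hba : (k : ℤ) - 1 ≤ b - a) (i j : ℕ) :
    (rowList a b c k i j).head? = some (Lx a b k i j, c + j) :=
  hseg_head? (rowLen_pos hba i j)

lemma rowList_getLast? (hba : (k : ℤ) - 1 ≤ b - a) (i j : ℕ) :
    (rowList a b c k i j).getLast? = some (Rx a b k i j, c + j) := by
  rw [rowList, hseg_getLast? (rowLen_pos hba i j), rowLen_cast hba]
  congr 2
  ring

lemma rowList_mem (hba : (k : ℤ) - 1 ≤ b - a) {i j : ℕ} {z : ℤ × ℤ} :
    z ∈ rowList a b c k i j ↔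
      z.2 = c + j ∧ Lx a b k i j ≤ z.1 ∧ z.1 ≤ Rx a b k i j := by
  rw [rowList, hseg_mem, rowLen_cast hba]
  constructor <;> rintro ⟨h1, h2, h3⟩ <;> exact ⟨h1, h2, by omega⟩

lemma dpath_mem (hba : (k : ℤ) - 1 ≤ b - a) {i : ℕ} {z : ℤ × ℤ} :
    z ∈ dpath a b c k i ↔
      ∃ j < k, z.2 = c + j ∧ Lx a b k i j ≤ z.1 ∧ z.1 ≤ Rx a b k i j := by
  rw [dpath, List.mem_flatten]
  constructor
  · rintro ⟨l, hl, hz⟩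
    rw [List.mem_map] at hl
    obtain ⟨j, hj, rfl⟩ := hl
    rw [List.mem_range] at hj
    exact ⟨j, hj, (rowList_mem hba).1 hz⟩
  · rintro ⟨j, hj, hz⟩
    exact ⟨rowList a b c k i j, List.mem_map_of_mem (List.mem_range.2 hj),
      (rowList_mem hba).2 hz⟩

lemma dpath_head? (hba : (k : ℤ) - 1 ≤ b - a) (hk : 0 < k) (i : ℕ) :
    (dpath a b c k i).head? = some (Lx a b k i 0, c) := by
  obtain ⟨m, rfl⟩ := Nat.exists_eq_succ_of_ne_zero hk.ne'
  rw [dpath, List.range_succ_eq_map, List.map_cons, List.flatten_cons,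
    List.head?_append_of_ne_nil _ (rowList_ne_nil hba i 0), rowList_head? hba]
  norm_num

lemma dpath_getLast? (hba : (k : ℤ) - 1 ≤ b - a) (hk : 0 < k) (i : ℕ) :
    (dpath a b c k i).getLast? = some (Rx a b k i (k - 1), c + (k - 1 : ℕ)) := by
  obtain ⟨m, rfl⟩ := Nat.exists_eq_succ_of_ne_zero hk.ne'
  rw [dpath, List.range_succ, List.map_append, List.flatten_append]
  simp only [List.map_cons, List.map_nil, List.flatten_cons, List.flatten_nil, List.append_nil]
  rw [List.getLast?_append_of_ne_nil _ (rowList_ne_nil hba i m), rowList_getLast? hba]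
  norm_num

lemma dpath_chain' (hba : (k : ℤ) - 1 ≤ b - a) (i : ℕ) :
    (dpath a b c k i).Chain' UpStep := by
  rw [dpath, List.Chain', List.isChain_flatten (by
    intro h
    rw [List.mem_map] at h
    obtain ⟨j, _, hj⟩ := h
    exact rowList_ne_nil hba i j hj)]
  constructor
  · rintro l hl
    rw [List.mem_map] at hl
    obtain ⟨j, _, rfl⟩ := hl
    exact hseg_chain'
  · rw [List.isChain_map]
    rcases k with _ | m
    · simp
    · refine (List.isChain_range_succ _ m).2 ?_
      intro j hj x hx y hy
      rw [rowList_getLast? hba] at hx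
      rw [rowList_head? hba] at hy
      rw [Option.mem_def, Option.some_inj] at hx hy
      subst hx; subst hy
      right
      rw [Prod.mk.injEq]
      refine ⟨(Lx_succ_row i j).trans rfl, by push_cast; ring⟩

lemma sum_map_range (g : ℕ → ℝ) (n : ℕ) :
    ((List.range n).map g).sum = ∑ j ∈ Finset.range n, g j := by
  induction n with
  | zero => simp
  | succ m ih => rw [List.range_succ, List.map_append, List.sum_append, ih,
      Finset.sum_range_succ]; simp

lemma dpath_weight (f : ℤ × ℤ → ℝ) (hba : (k : ℤ) - 1 ≤ b - a) (i : ℕ) :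
    ((dpath a b c k i).map f).sum
      = ∑ j ∈ Finset.range k,
          ∑ x ∈ Finset.Ico (Lx a b k i j) (Rx a b k i j + 1), f (x, c + j) := by
  rw [dpath, List.map_flatten, List.sum_flatten, List.map_map, List.map_map]
  rw [sum_map_range]
  refine Finset.sum_congr rfl ?_
  intro j _
  show ((rowList a b c k i j).map f).sum = _
  rw [rowList, hseg_map_sum, rowLen_cast hba]
  congr 1
  rw [show Lx a b k i j + (Rx a b k i j - Lx a b k i j + 1) = Rx a b k i j + 1 by ring]

lemma sum_Ico_parts (g : ℤ → ℝ) (n : ℕ) (t : ℕ → ℤ) (ht : ∀ i, t i ≤ t (i + 1)) :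
    ∑ i ∈ Finset.range n, ∑ x ∈ Finset.Ico (t i) (t (i + 1)), g x
      = ∑ x ∈ Finset.Ico (t 0) (t n), g x := by
  induction n with
  | zero => simp
  | succ m ih =>
    have hmono : t 0 ≤ t m := by
      have : Monotone t := monotone_nat_of_le_succ ht
      exact this (Nat.zero_le m)
    rw [Finset.sum_range_succ, ih,
      ← Finset.sum_union (Finset.Ico_disjoint_Ico_consecutive _ _ _),
      Finset.Ico_union_Ico_eq_Ico hmono (ht m)]

lemma Rx_last (hk : 0 < k) (j : ℕ) : Rx a b k (k - 1) j = b := by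
  unfold Rx; split_ifs <;> omega

lemma Lx_zero {j : ℕ} (hj : j < k) : Lx a b k 0 j = a := by
  unfold Lx; split_ifs <;> omega

lemma row_total (g : ℤ → ℝ) (hba : (k : ℤ) - 1 ≤ b - a) {j : ℕ} (hj : j < k) :
    ∑ i ∈ Finset.range k, ∑ x ∈ Finset.Ico (Lx a b k i j) (Rx a b k i j + 1), g x
      = ∑ x ∈ Finset.Ico a (b + 1), g x := by
  have hk : 0 < k := by omega
  set t : ℕ → ℤ := fun i => if i < k then Lx a b k i j else b + 1 with hT
  have ht : ∀ i, t i ≤ t (i + 1) := by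
    intro i
    have h1 := Lx_le_Rx (a := a) (b := b) hba i j
    have h2 := Lx_succ_col (a := a) hba i j
    have h3 := Rx_le_b (a := a) hba (i := min i (k-1)) (by omega) j
    simp only [hT]
    split_ifs with hik hik2 hik2
    · rw [Lx_succ_col hba]; omega
    · have : i = k - 1 := by omega
      subst this
      have := Rx_le_b (a := a) hba (i := k - 1) (by omega) j
      have := Lx_le_Rx (a := a) (b := b) hba (k - 1) j
      omega
    · omega
    · omega
  have key := sum_Ico_parts g k t ht
  have ht0 : t 0 = a := by simp only [hT]; rw [if_pos hk, Lx_zero hj]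
  have htk : t k = b + 1 := by simp only [hT]; rw [if_neg (lt_irrefl k)]
  rw [ht0, htk] at key
  rw [← key]
  refine Finset.sum_congr rfl ?_
  intro i hi
  rw [Finset.mem_range] at hi
  simp only [hT]
  rw [if_pos hi]
  congr 1
  split_ifs with h
  · rw [Lx_succ_col hba]
  · have : i = k - 1 := by omega
    subst this
    rw [Rx_last hk]

lemma Lx_first {i : ℕ} (hi : i < k) : Lx a b k i 0 = a + i := by
  unfold Lx; split_ifs <;> omega

lemma Rx_last_col {i : ℕ} (hk : 0 < k) : Rx a b k i (k - 1) = b - k + 1 + i := by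
  unfold Rx; split_ifs <;> omega

lemma dpath_disjoint (hba : (k : ℤ) - 1 ≤ b - a) {i i' : ℕ} (h : i ≠ i') :
    ∀ z ∈ dpath a b c k i, z ∉ dpath a b c k i' := by
  intro z hz hz'
  rw [dpath_mem hba] at hz hz'
  obtain ⟨j, hj, e2, l1, r1⟩ := hz
  obtain ⟨j', hj', e2', l1', r1'⟩ := hz'
  obtain rfl : j = j' := by omega
  rcases h.lt_or_gt with hlt | hlt
  · have := Rx_lt_Lx (a := a) (b := b) (k := k) hba j hlt
    omega
  · have := Rx_lt_Lx (a := a) (b := b) (k := k) hba j hlt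
    omega

lemma dpath_total (f : ℤ × ℤ → ℝ) (hba : (k : ℤ) - 1 ≤ b - a) :
    ∑ i ∈ Finset.range k, ((dpath a b c k i).map f).sum
      = ∑ j ∈ Finset.range k, ∑ x ∈ Finset.Ico a (b + 1), f (x, c + j) := by
  rw [Finset.sum_congr rfl (fun i _ => dpath_weight f hba i), Finset.sum_comm]
  refine Finset.sum_congr rfl ?_
  intro j hj
  exact row_total _ hba (Finset.mem_range.1 hj)

end PathFacts

/-! ### general facts about up-right paths -/

lemma upstep_pairwise {p : List (ℤ × ℤ)} (h : p.Chain' UpStep) :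
    p.Pairwise (fun x y => x.1 ≤ y.1 ∧ x.2 ≤ y.2 ∧ x.1 + x.2 < y.1 + y.2) := by
  letI : IsTrans (ℤ × ℤ) (fun x y => x.1 ≤ y.1 ∧ x.2 ≤ y.2 ∧ x.1 + x.2 < y.1 + y.2) :=
    ⟨fun x y z h1 h2 => ⟨by omega, by omega, by omega⟩⟩
  refine List.isChain_iff_pairwise.1 (List.IsChain.imp ?_ h)
  rintro x y (rfl | rfl) <;> simp <;> omega

lemma path_nodup {p : List (ℤ × ℤ)} (h : p.Chain' UpStep) : p.Nodup := by
  refine (upstep_pairwise h).imp ?_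
  rintro x y hxy rfl
  omega

lemma path_bounds {p : List (ℤ × ℤ)} {x y : ℤ × ℤ} (h : p.head? = some x)
    (h' : p.getLast? = some y) (hc : p.Chain' UpStep) :
    ∀ z ∈ p, x.1 ≤ z.1 ∧ x.2 ≤ z.2 ∧ z.1 ≤ y.1 ∧ z.2 ≤ y.2 := by
  have hp := upstep_pairwise hc
  intro z hz
  have h1 : x.1 ≤ z.1 ∧ x.2 ≤ z.2 := by
    rcases p with _ | ⟨w, t⟩
    · simp at h
    · rw [List.head?_cons, Option.some_inj] at h
      subst h
      rw [List.pairwise_cons] at hp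
      rcases List.mem_cons.1 hz with rfl | hzt
      · exact ⟨le_refl _, le_refl _⟩
      · exact ⟨(hp.1 z hzt).1, (hp.1 z hzt).2.1⟩
  have h2 : z.1 ≤ y.1 ∧ z.2 ≤ y.2 := by
    have hrev : p.reverse.Pairwise (fun u v => v.1 ≤ u.1 ∧ v.2 ≤ u.2 ∧ v.1 + v.2 < u.1 + u.2) := by
      rw [List.pairwise_reverse]
      exact hp
    have hyh : p.reverse.head? = some y := by rw [List.head?_reverse]; exact h'
    have hzr : z ∈ p.reverse := List.mem_reverse.2 hz
    rcases hr : p.reverse with _ | ⟨w, t⟩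
    · rw [hr] at hyh; simp at hyh
    · rw [hr] at hyh hzr hrev
      rw [List.head?_cons, Option.some_inj] at hyh
      subst hyh
      rw [List.pairwise_cons] at hrev
      rcases List.mem_cons.1 hzr with rfl | hzt
      · exact ⟨le_refl _, le_refl _⟩
      · exact ⟨(hrev.1 z hzt).1, (hrev.1 z hzt).2.1⟩
  exact ⟨h1.1, h1.2, h2.1, h2.2⟩

/-! ### further auxiliary lemmas -/

lemma telescope_sum (F : ℕ → ℝ) (n : ℕ) :
    ∑ l ∈ Finset.Icc 1 n, (F l - F (l - 1)) = F n - F 0 := by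
  induction n with
  | zero => simp
  | succ m ih =>
    rw [Finset.sum_Icc_succ_top (by omega), ih]
    simp

lemma ZMulti_zero (f : ℤ × ℤ → ℝ) (e : Fin 0 → (ℤ × ℤ) × (ℤ × ℤ)) : ZMulti f 0 e = 0 := by
  rw [ZMulti]
  have : {w | ∃ π : Fin 0 → List (ℤ × ℤ),
      (∀ i, IsPath (π i) (e i).1 (e i).2) ∧
      (∀ i j, i ≠ j → ∀ x ∈ π i, x ∉ π j) ∧
      w = ∑ i, pathWeight f (π i)} = {0} := by
    ext w
    simp only [Set.mem_setOf_eq, Set.mem_singleton_iff]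
    constructor
    · rintro ⟨π, -, -, rfl⟩
      simp
    · rintro rfl
      exact ⟨fun i => i.elim0, fun i => i.elim0, fun i j _ => i.elim0, by simp⟩
  rw [this, csSup_singleton]

lemma sum_Ico_shift (g : ℤ → ℝ) (c : ℤ) (k : ℕ) :
    ∑ y ∈ Finset.Ico c (c + k), g y = ∑ j ∈ Finset.range k, g (c + j) := by
  induction k with
  | zero => simp
  | succ m ih =>
    have h2 : Finset.Ico c (c + (↑(m+1) : ℤ)) = insert (c + m) (Finset.Ico c (c + m)) := by
      ext x
      simp only [Finset.mem_Ico, Finset.mem_insert]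
      push_cast
      omega
    rw [h2, Finset.sum_insert (by simp), ih, Finset.sum_range_succ]
    ring

/-- For nonnegative integer weights on a box that is at least as wide as it is tall,
with `k_max` equal to the height of the box, the size of the partition `Z^Δ_M(u)`
(the telescoping sum of the increments) equals `Z_M(u^{k_max})`, which equals the
total weight of the box. -/
theorem ZDelta_partition_size (M : ℤ × ℤ → ℕ) (u : (ℤ × ℤ) × (ℤ × ℤ)) (hu : IsBox u)
    (hwide : u.2.2 - u.1.2 ≤ u.2.1 - u.1.1)
    (hmono : ∀ l : ℕ, 2 ≤ l → (l : ℤ) ≤ u.2.2 - u.1.2 + 1 →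
      ZMulti (fun x => (M x : ℝ)) l (ukEnds u l)
          - ZMulti (fun x => (M x : ℝ)) (l - 1) (ukEnds u (l - 1)) ≤
        ZMulti (fun x => (M x : ℝ)) (l - 1) (ukEnds u (l - 1))
          - ZMulti (fun x => (M x : ℝ)) (l - 2) (ukEnds u (l - 2))) :
    (∑ l ∈ Finset.Icc 1 (u.2.2 - u.1.2 + 1).toNat,
        (ZMulti (fun x => (M x : ℝ)) l (ukEnds u l)
          - ZMulti (fun x => (M x : ℝ)) (l - 1) (ukEnds u (l - 1))))
      = ZMulti (fun x => (M x : ℝ)) (u.2.2 - u.1.2 + 1).toNat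
          (ukEnds u (u.2.2 - u.1.2 + 1).toNat) ∧
    ZMulti (fun x => (M x : ℝ)) (u.2.2 - u.1.2 + 1).toNat
        (ukEnds u (u.2.2 - u.1.2 + 1).toNat)
      = ∑ᶠ x ∈ boxSet u, (M x : ℝ) := by
  clear hmono
  obtain ⟨hab, hcd⟩ := hu
  set f : ℤ × ℤ → ℝ := fun x => (M x : ℝ) with hf
  set k := (u.2.2 - u.1.2 + 1).toNat with hk_def
  have hkc : (k : ℤ) = u.2.2 - u.1.2 + 1 := by rw [hk_def]; omega
  have hk : 0 < k := by omega
  have hba : (k : ℤ) - 1 ≤ u.2.1 - u.1.1 := by omega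
  set B : ℝ := ∑ j ∈ Finset.range k,
      ∑ x ∈ Finset.Ico u.1.1 (u.2.1 + 1), f (x, u.1.2 + j) with hB
  set BigBox : Finset (ℤ × ℤ) :=
      Finset.Ico u.1.1 (u.2.1 + 1) ×ˢ Finset.Ico u.1.2 (u.2.2 + 1) with hBB
  have hbox : ∑ x ∈ BigBox, f x = B := by
    rw [hBB, Finset.sum_product, Finset.sum_comm, hB]
    have hd : u.2.2 + 1 = u.1.2 + (k : ℤ) := by omega
    rw [hd]
    exact sum_Ico_shift (fun y => ∑ x ∈ Finset.Ico u.1.1 (u.2.1 + 1), f (x, y)) u.1.2 k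
  have hboxset : boxSet u = (↑BigBox : Set (ℤ × ℤ)) := by
    ext p
    simp only [boxSet, Set.mem_setOf_eq, hBB, Finset.coe_product, Set.mem_prod,
      Finset.mem_coe, Finset.mem_Ico]
    omega
  have hub : ∀ w ∈ {w | ∃ π : Fin k → List (ℤ × ℤ),
      (∀ i, IsPath (π i) ((ukEnds u k i)).1 ((ukEnds u k i)).2) ∧
      (∀ i j, i ≠ j → ∀ x ∈ π i, x ∉ π j) ∧
      w = ∑ i, pathWeight f (π i)}, w ≤ B := by
    rintro w ⟨π, hpath, hdis, rfl⟩
    have hdisj : (↑(Finset.univ : Finset (Fin k)) : Set (Fin k)).PairwiseDisjoint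
        (fun i => (π i).toFinset) := by
      intro i _ j _ hij
      rw [Function.onFun, Finset.disjoint_left]
      intro x hxi hxj
      exact hdis i j hij x (List.mem_toFinset.1 hxi) (List.mem_toFinset.1 hxj)
    have hsub : Finset.univ.biUnion (fun i => (π i).toFinset) ⊆ BigBox := by
      intro x hx
      rw [Finset.mem_biUnion] at hx
      obtain ⟨i, -, hxi⟩ := hx
      rw [List.mem_toFinset] at hxi
      obtain ⟨hp1, hp2, hp3⟩ := hpath i
      have hb := path_bounds hp1 hp2 hp3 x hxi
      simp only [ukEnds] at hb
      have hik : (i : ℕ) < k := i.isLt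
      rw [hBB, Finset.mem_product, Finset.mem_Ico, Finset.mem_Ico]
      constructor <;> constructor <;> omega
    calc ∑ i, pathWeight f (π i)
        = ∑ i, ∑ x ∈ (π i).toFinset, f x := by
          refine Finset.sum_congr rfl fun i _ => ?_
          exact (List.sum_toFinset f (path_nodup (hpath i).2.2)).symm
      _ = ∑ x ∈ Finset.univ.biUnion (fun i => (π i).toFinset), f x :=
          (Finset.sum_biUnion hdisj).symm
      _ ≤ ∑ x ∈ BigBox, f x := by
          refine Finset.sum_le_sum_of_subset_of_nonneg hsub fun x _ _ => ?_
          rw [hf]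
          positivity
      _ = B := hbox
  have hmem : B ∈ {w | ∃ π : Fin k → List (ℤ × ℤ),
      (∀ i, IsPath (π i) ((ukEnds u k i)).1 ((ukEnds u k i)).2) ∧
      (∀ i j, i ≠ j → ∀ x ∈ π i, x ∉ π j) ∧
      w = ∑ i, pathWeight f (π i)} := by
    refine ⟨fun i => dpath u.1.1 u.2.1 u.1.2 k i, fun i => ?_, ?_, ?_⟩
    · refine ⟨?_, ?_, dpath_chain' hba i⟩
      · rw [dpath_head? hba hk, Lx_first i.isLt]
        rfl
      · rw [dpath_getLast? hba hk, Rx_last_col hk]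
        refine congrArg some (Prod.ext ?_ ?_)
        · show u.2.1 - (k : ℤ) + 1 + (i : ℕ) = u.2.1 - ((k : ℤ) - 1 - (i : ℤ))
          push_cast
          ring
        · show u.1.2 + ((k - 1 : ℕ) : ℤ) = u.2.2
          omega
    · intro i j hij x hxi
      exact dpath_disjoint hba (fun h => hij (Fin.ext h)) x hxi
    · rw [show (fun i : Fin k => pathWeight f (dpath u.1.1 u.2.1 u.1.2 k i))
            = (fun i : Fin k => ((dpath u.1.1 u.2.1 u.1.2 k (i : ℕ)).map f).sum) from rfl]
      rw [Fin.sum_univ_eq_sum_range (fun i => ((dpath u.1.1 u.2.1 u.1.2 k i).map f).sum) k]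
      exact (dpath_total f hba).symm
  have hZ : ZMulti f k (ukEnds u k) = B :=
    le_antisymm (csSup_le ⟨B, hmem⟩ hub) (le_csSup ⟨B, hub⟩ hmem)
  constructor
  · rw [telescope_sum (fun l => ZMulti f l (ukEnds u l)) k, ZMulti_zero, sub_zero]
  · rw [hZ, hboxset, finsum_mem_coe_finset, hbox]
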